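/- In QLP extended with a fixed point constant δ and the axiom δ ↔ [E ∧ ¬(∃x)x:(δ → E)] for a propositional letter E (and F = ∅), the formula ¬δ is derivable. -/
import Mathlib


/-- Justification terms of Fitting's quantified logic of proofs QLP:
variables, primitive terms `f(x₁,…,xₙ)` (a function symbol applied to
justification variables), application `·`, sum `+`, proof checker `!`, and
the uniform verifier `(t ∀ x)` (which binds `x`). -/
inductive Tm : Type
  | var : ℕ → Tm
  | prim : ℕ → List ℕ → Tm
  | app : Tm → Tm → Tm
  | sum : Tm → Tm → Tm
  | bang : Tm → Tm
  | uall : Tm → ℕ → Tm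

/-- Free justification variables of a term. -/
def Tm.fv : Tm → Finset ℕ
  | .var x => {x}
  | .prim _ xs => xs.toFinset
  | .app s t => s.fv ∪ t.fv
  | .sum s t => s.fv ∪ t.fv
  | .bang t => t.fv
  | .uall t x => t.fv.erase x

/-- Substitution of a term for a justification variable in a term. -/
def Tm.substT (s : Tm) (x : ℕ) : Tm → Tm
  | .var y => if y = x then s else .var y
  | .prim f xs => .prim f xs
  | .app a b => .app (Tm.substT s x a) (Tm.substT s x b)
  | .sum a b => .sum (Tm.substT s x a) (Tm.substT s x b)
  | .bang a => .bang (Tm.substT s x a)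
  | .uall a y => if y = x then .uall a y else .uall (Tm.substT s x a) y

/-- `FreeForT s x t`: the term `s` is substitutable ("free for") the variable
`x` in the term `t` (no variable of `s` gets captured, and `x` does not occur
inside a primitive term). -/
def FreeForT (s : Tm) (x : ℕ) : Tm → Prop
  | .var _ => True
  | .prim _ xs => x ∉ xs
  | .app a b => FreeForT s x a ∧ FreeForT s x b
  | .sum a b => FreeForT s x a ∧ FreeForT s x b
  | .bang a => FreeForT s x a
  | .uall a y => x ∈ Tm.fv (.uall a y) → (y ∉ s.fv ∧ FreeForT s x a)

/-- Formulas of QLP, with quantifiers over justification variables. -/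
inductive Fm : Type
  | atom : ℕ → Fm
  | delta : Fm
  | bot : Fm
  | imp : Fm → Fm → Fm
  | just : Tm → Fm → Fm
  | all : ℕ → Fm → Fm
  | ex : ℕ → Fm → Fm

namespace Fm

def neg (A : Fm) : Fm := imp A bot
def disj (A B : Fm) : Fm := imp (neg A) B
def conj (A B : Fm) : Fm := neg (imp A (neg B))
def iff' (A B : Fm) : Fm := conj (imp A B) (imp B A)
/-- Exclusive disjunction. -/
def xor' (A B : Fm) : Fm := conj (disj A B) (neg (conj A B))

/-- Free justification variables of a formula. -/
def fv : Fm → Finset ℕ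
  | atom _ => ∅
  | delta => ∅
  | bot => ∅
  | imp A B => A.fv ∪ B.fv
  | just t A => t.fv ∪ A.fv
  | all x A => A.fv.erase x
  | ex x A => A.fv.erase x

/-- Substitution of a term for a justification variable in a formula. -/
def subst (s : Tm) (x : ℕ) : Fm → Fm
  | atom p => atom p
  | delta => delta
  | bot => bot
  | imp A B => imp (A.subst s x) (B.subst s x)
  | just t A => just (Tm.substT s x t) (A.subst s x)
  | all y A => if y = x then all y A else all y (A.subst s x)
  | ex y A => if y = x then ex y A else ex y (A.subst s x)

end Fm

/-- `FreeFor s x A`: the term `s` is substitutable for the variable `x` in the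
formula `A`. -/
def FreeFor (s : Tm) (x : ℕ) : Fm → Prop
  | .atom _ => True
  | .delta => True
  | .bot => True
  | .imp A B => FreeFor s x A ∧ FreeFor s x B
  | .just t A => FreeForT s x t ∧ FreeFor s x A
  | .all y A => x ∈ Fm.fv (.all y A) → (y ∉ s.fv ∧ FreeFor s x A)
  | .ex y A => x ∈ Fm.fv (.ex y A) → (y ∉ s.fv ∧ FreeFor s x A)

open Fm

/-- Provability in Fitting's quantified logic of proofs QLP, extended by the
fixed point axiom `fpAx` and with axiom necessitation restricted to the
primitive term specification `F`. Axioms: propositional tautologies (via a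
Hilbert basis), quantifier axioms Q1–Q4, jK, jT, j4, Sum, and the uniformity
formula UF; rules: modus ponens MP, generalization Gen, axiom necessitation AN,
and quantified necessitation qNec. -/
inductive Prov (F : Fm → Prop) (fpAx : Fm) : Fm → Prop
  | ax1 (A B : Fm) : Prov F fpAx (imp A (imp B A))
  | ax2 (A B C : Fm) : Prov F fpAx (imp (imp A (imp B C)) (imp (imp A B) (imp A C)))
  | ax3 (A B : Fm) : Prov F fpAx (imp (imp (neg A) (neg B)) (imp B A))
  | q1 {t : Tm} {x : ℕ} {A : Fm} (h : FreeFor t x A) :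
      Prov F fpAx (imp (all x A) (A.subst t x))
  | q2 {x : ℕ} {A B : Fm} (h : x ∉ A.fv) :
      Prov F fpAx (imp (all x (imp A B)) (imp A (all x B)))
  | q3 {t : Tm} {x : ℕ} {A : Fm} (h : FreeFor t x A) :
      Prov F fpAx (imp (A.subst t x) (ex x A))
  | q4 {x : ℕ} {A B : Fm} (h : x ∉ B.fv) :
      Prov F fpAx (imp (all x (imp A B)) (imp (ex x A) B))
  | jk (s t : Tm) (A B : Fm) :
      Prov F fpAx (imp (just s (imp A B)) (imp (just t A) (just (.app s t) B)))
  | jt (t : Tm) (A : Fm) : Prov F fpAx (imp (just t A) A)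
  | j4 (t : Tm) (A : Fm) :
      Prov F fpAx (imp (just t A) (just (.bang t) (just t A)))
  | sum1 (s t : Tm) (A : Fm) : Prov F fpAx (imp (just s A) (just (.sum s t) A))
  | sum2 (s t : Tm) (A : Fm) : Prov F fpAx (imp (just s A) (just (.sum t s) A))
  | uf {y : ℕ} {t : Tm} {x : ℕ} {A : Fm} (hy1 : y ∉ t.fv) (hy2 : y ∉ A.fv) :
      Prov F fpAx (imp (ex y (just (.var y) (all x (just t A))))
        (just (.uall t x) (all x A)))
  | an {A : Fm} : F A → Prov F fpAx A
  | fp : Prov F fpAx fpAx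
  | mp {A B : Fm} : Prov F fpAx (imp A B) → Prov F fpAx A → Prov F fpAx B
  | gen {A : Fm} (x : ℕ) : Prov F fpAx A → Prov F fpAx (all x A)
  | qnec {x : ℕ} {A : Fm} (h : x ∉ A.fv) :
      Prov F fpAx A → Prov F fpAx (ex x (just (.var x) A))

section Helpers

variable {F : Fm → Prop} {fpAx : Fm}

/-- Derivability from a list of hypotheses, on top of `Prov`. -/
inductive Der (F : Fm → Prop) (fpAx : Fm) : List Fm → Fm → Prop
  | hyp {Γ A} : A ∈ Γ → Der F fpAx Γ A
  | prov {Γ A} : Prov F fpAx A → Der F fpAx Γ A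
  | mp {Γ A B} : Der F fpAx Γ (imp A B) → Der F fpAx Γ A → Der F fpAx Γ B

theorem Prov.id (A : Fm) : Prov F fpAx (imp A A) :=
  Prov.mp (Prov.mp (Prov.ax2 A (imp A A) A) (Prov.ax1 A (imp A A))) (Prov.ax1 A A)

/-- Deduction theorem. -/
theorem Der.ded {Γ : List Fm} {A B : Fm} (h : Der F fpAx (A :: Γ) B) :
    Der F fpAx Γ (imp A B) := by
  induction h with
  | hyp h =>
    rcases List.mem_cons.1 h with rfl | h
    · exact Der.prov (Prov.id _)
    · exact Der.mp (Der.prov (Prov.ax1 _ _)) (Der.hyp h)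
  | prov h => exact Der.mp (Der.prov (Prov.ax1 _ _)) (Der.prov h)
  | mp _ _ ih1 ih2 => exact Der.mp (Der.mp (Der.prov (Prov.ax2 _ _ _)) ih1) ih2

theorem Der.toProv {A : Fm} (h : Der F fpAx [] A) : Prov F fpAx A := by
  induction h with
  | hyp h => simp at h
  | prov h => exact h
  | mp _ _ ih1 ih2 => exact Prov.mp ih1 ih2

theorem Der.efq {Γ : List Fm} (A : Fm) : Der F fpAx Γ (imp bot A) :=
  Der.mp (Der.prov (Prov.ax3 A bot))
    (Der.mp (Der.prov (Prov.ax1 (neg bot) (neg A))) (Der.prov (Prov.id bot)))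

theorem Der.dne {Γ : List Fm} (A : Fm) : Der F fpAx Γ (imp (neg (neg A)) A) := by
  apply Der.ded
  have hT : Der F fpAx (neg (neg A) :: Γ) (imp (neg A) (neg (imp bot bot))) := by
    apply Der.ded
    have h1 : Der F fpAx (neg A :: neg (neg A) :: Γ) (neg (neg A)) := Der.hyp (by simp)
    have h2 : Der F fpAx (neg A :: neg (neg A) :: Γ) (neg A) := Der.hyp (by simp)
    have hbot : Der F fpAx (neg A :: neg (neg A) :: Γ) bot := Der.mp h1 h2
    exact Der.mp (Der.efq _) hbot
  exact Der.mp (Der.mp (Der.prov (Prov.ax3 A (imp bot bot))) hT) (Der.prov (Prov.id bot))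

/-- `conj P Q → P`. -/
theorem Der.conjE1 {Γ : List Fm} (P Q : Fm) : Der F fpAx Γ (imp (conj P Q) P) := by
  apply Der.ded
  apply Der.mp (Der.dne P)
  apply Der.ded
  -- context: ¬P, ¬(P → ¬Q); derive bot
  have hPQ : Der F fpAx (neg P :: conj P Q :: Γ) (imp P (neg Q)) := by
    apply Der.ded
    have h1 : Der F fpAx (P :: neg P :: conj P Q :: Γ) (neg P) := Der.hyp (by simp)
    have h2 : Der F fpAx (P :: neg P :: conj P Q :: Γ) P := Der.hyp (by simp)
    exact Der.mp (Der.efq _) (Der.mp h1 h2)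
  exact Der.mp (Der.hyp (show conj P Q ∈ _ by simp [conj])) hPQ

/-- `conj P Q → Q`. -/
theorem Der.conjE2 {Γ : List Fm} (P Q : Fm) : Der F fpAx Γ (imp (conj P Q) Q) := by
  apply Der.ded
  apply Der.mp (Der.dne Q)
  apply Der.ded
  have hPQ : Der F fpAx (neg Q :: conj P Q :: Γ) (imp P (neg Q)) :=
    Der.mp (Der.prov (Prov.ax1 _ _)) (Der.hyp (by simp))
  exact Der.mp (Der.hyp (show conj P Q ∈ _ by simp [conj])) hPQ

end Helpers

/-- The self-referential one-day Surprise Test announcement in QLP cannot be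
fulfilled: in QLP extended with a fixed point constant `δ` and the axiom
`δ ↔ [E ∧ ¬(∃x)x:(δ → E)]` for a propositional letter `E`, with empty
primitive term specification, the formula `¬δ` is derivable. -/
theorem qlp_surprise_one_day (e : ℕ) :
    Prov (fun _ => False)
      (iff' delta (conj (atom e) (neg (ex 0 (just (.var 0) (imp delta (atom e)))))))
      (neg delta) := by
  set E' : Fm := ex 0 (just (.var 0) (imp delta (atom e))) with hE'
  set C : Fm := conj (atom e) (neg E') with hC
  set F : Fm → Prop := fun _ => False with hF
  set fp : Fm := iff' delta C with hfp
  -- δ → C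
  have hdc : Prov F fp (imp delta C) :=
    Der.toProv (Der.mp (Der.conjE1 _ _) (Der.prov Prov.fp))
  -- δ → E
  have hde : Prov F fp (imp delta (atom e)) := by
    apply Der.toProv
    apply Der.ded
    exact Der.mp (Der.conjE1 _ _) (Der.mp (Der.prov hdc) (Der.hyp (by simp)))
  -- (∃x) x:(δ → E)
  have hE'prov : Prov F fp E' := Prov.qnec (by simp [Fm.fv]) hde
  -- ¬δ
  apply Der.toProv
  apply Der.ded
  have hC : Der F fp [delta] C := Der.mp (Der.prov hdc) (Der.hyp (by simp))
  have hnE' : Der F fp [delta] (neg E') := Der.mp (Der.conjE2 _ _) hC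
  exact Der.mp hnE' (Der.prov hE'prov)
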